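/- Let P be the subalgebra of UT_4(F) of matrices with diagonal (a,b,c,a) and possibly nonzero entries in positions (1,2),(1,3),(1,4),(2,4),(3,4). Then P is closed under the reflection involution θ_4, the center of P is F·I + F·e_{14}, and the polynomial [x_1^+,x_2^+][x_3^+,x_4^+] is a proper central *-polynomial for (P, θ_4): every product [A,B][C,D] with A,B,C,D symmetric lies in Z(P), and some such product is nonzero. -/

import Mathlib

open Matrix

/-- The reflection involution `θ_4` on `M_4(F)`. -/
def reflInv {F : Type*} [Field F] (A : Matrix (Fin 4) (Fin 4) F) :
    Matrix (Fin 4) (Fin 4) F :=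
  Matrix.of fun i j => A j.rev i.rev

/-- Membership in the algebra `P ⊆ UT_4(F)`: upper triangular, diagonal `(a,b,c,a)`
and entry `(2,3)` (1-indexed) equal to zero. -/
def memP {F : Type*} [Field F] (M : Matrix (Fin 4) (Fin 4) F) : Prop :=
  (∀ i j : Fin 4, j < i → M i j = 0) ∧ M 0 0 = M 3 3 ∧ M 1 2 = 0

private lemma finmk0 (h : 0 < 4) : (⟨0, h⟩ : Fin 4) = 0 := rfl
private lemma finmk1 (h : 1 < 4) : (⟨1, h⟩ : Fin 4) = 1 := rfl
private lemma finmk2 (h : 2 < 4) : (⟨2, h⟩ : Fin 4) = 2 := rfl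
private lemma finmk3 (h : 3 < 4) : (⟨3, h⟩ : Fin 4) = 3 := rfl

set_option maxHeartbeats 1000000 in
/-- `P` is closed under `θ_4`, `Z(P) = F·1 + F·e_{14}`, and
`[x₁⁺,x₂⁺][x₃⁺,x₄⁺]` is a proper central `*`-polynomial for `(P, θ_4)`. -/
theorem stmt_11 (F : Type*) [Field F] [CharZero F] :
    (∀ M : Matrix (Fin 4) (Fin 4) F, memP M → memP (reflInv M)) ∧
    (∀ M : Matrix (Fin 4) (Fin 4) F, memP M →
      ((∀ X : Matrix (Fin 4) (Fin 4) F, memP X → M * X = X * M) ↔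
        ∃ a b : F, M = a • (1 : Matrix (Fin 4) (Fin 4) F) +
          b • Matrix.single 0 3 (1 : F))) ∧
    (∀ A B C D : Matrix (Fin 4) (Fin 4) F,
      memP A → memP B → memP C → memP D →
      reflInv A = A → reflInv B = B → reflInv C = C → reflInv D = D →
      ∃ a b : F, (A * B - B * A) * (C * D - D * C) =
        a • (1 : Matrix (Fin 4) (Fin 4) F) + b • Matrix.single 0 3 (1 : F)) ∧
    (∃ A B C D : Matrix (Fin 4) (Fin 4) F,
      memP A ∧ memP B ∧ memP C ∧ memP D ∧
      reflInv A = A ∧ reflInv B = B ∧ reflInv C = C ∧ reflInv D = D ∧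
      (A * B - B * A) * (C * D - D * C) ≠ 0) := by
  refine ⟨?_, ?_, ?_, ?_⟩
  · -- P closed under reflInv
    rintro M ⟨h1, h2, h3⟩
    refine ⟨fun i j hij => h1 _ _ (by simpa using hij), ?_, ?_⟩
    · show M (Fin.rev 0) (Fin.rev 0) = M (Fin.rev 3) (Fin.rev 3)
      rw [show (Fin.rev 0 : Fin 4) = 3 by decide, show (Fin.rev 3 : Fin 4) = 0 by decide]
      exact h2.symm
    · show M (Fin.rev 2) (Fin.rev 1) = 0
      rw [show (Fin.rev 2 : Fin 4) = 1 by decide, show (Fin.rev 1 : Fin 4) = 2 by decide]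
      exact h3
  · -- center
    rintro M ⟨h1, h2, h3⟩
    have m10 := h1 1 0 (by decide); have m20 := h1 2 0 (by decide)
    have m30 := h1 3 0 (by decide); have m21 := h1 2 1 (by decide)
    have m31 := h1 3 1 (by decide); have m32 := h1 3 2 (by decide)
    constructor
    · intro hc
      have memE : ∀ i j : Fin 4, i < j → (i,j) ≠ (1,2) →
          memP (Matrix.single i j (1:F)) := by
        intro i j hij hne
        refine ⟨fun k l hkl => ?_, ?_, ?_⟩
        · rw [Matrix.single]; simp only [Matrix.of_apply]
          rw [if_neg]; rintro ⟨rfl, rfl⟩; exact absurd (hij.trans hkl) (lt_irrefl _)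
        · fin_cases i <;> fin_cases j <;> simp_all [Matrix.single]
        · fin_cases i <;> fin_cases j <;> simp_all [Matrix.single]
      have e01 := hc _ (memE 0 1 (by decide) (by decide))
      have e02 := hc _ (memE 0 2 (by decide) (by decide))
      have e13 := hc _ (memE 1 3 (by decide) (by decide))
      have e23 := hc _ (memE 2 3 (by decide) (by decide))
      have c1 := congrFun (congrFun e01 0) 1
      have c2 := congrFun (congrFun e01 0) 3
      have c3 := congrFun (congrFun e23 2) 3
      have c4 := congrFun (congrFun e23 0) 3
      have c5 := congrFun (congrFun e02 0) 3
      have c6 := congrFun (congrFun e13 0) 3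
      simp [Matrix.mul_apply, Fin.sum_univ_four, Matrix.single] at c1 c2 c3 c4 c5 c6
      clear e01 e02 e13 e23 hc memE
      refine ⟨M 0 0, M 0 3, ?_⟩
      ext i j
      fin_cases i <;> fin_cases j <;>
        simp [Matrix.add_apply, Matrix.smul_apply, Matrix.one_apply, Matrix.single,
          m10, m20, m30, m21, m31, m32, ← c1, ← c2, c3.trans h2.symm, c4, ← c5, c6, h3, h2.symm]
    · rintro ⟨a, b, rfl⟩ X ⟨g1, g2, g3⟩
      have x10 := g1 1 0 (by decide); have x20 := g1 2 0 (by decide)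
      have x30 := g1 3 0 (by decide); have x21 := g1 2 1 (by decide)
      have x31 := g1 3 1 (by decide); have x32 := g1 3 2 (by decide)
      ext i j
      fin_cases i <;> fin_cases j <;>
        simp [Matrix.mul_apply, Fin.sum_univ_four, Matrix.one_apply, Matrix.single,
          Matrix.add_apply, Matrix.smul_apply, x10, x20, x30, x21, x31, x32, g2, g3] <;>
        ring
  · -- central values
    rintro A B C D ⟨a1, a2, a3⟩ ⟨b1, b2, b3⟩ ⟨c1, c2, c3⟩ ⟨d1, d2, d3⟩ sA sB sC sD
    have a10 := a1 1 0 (by decide); have a20 := a1 2 0 (by decide)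
    have a30 := a1 3 0 (by decide); have a21 := a1 2 1 (by decide)
    have a31 := a1 3 1 (by decide); have a32 := a1 3 2 (by decide)
    have b10 := b1 1 0 (by decide); have b20 := b1 2 0 (by decide)
    have b30 := b1 3 0 (by decide); have b21 := b1 2 1 (by decide)
    have b31 := b1 3 1 (by decide); have b32 := b1 3 2 (by decide)
    have c10 := c1 1 0 (by decide); have c20 := c1 2 0 (by decide)
    have c30 := c1 3 0 (by decide); have c21 := c1 2 1 (by decide)
    have c31 := c1 3 1 (by decide); have c32 := c1 3 2 (by decide)
    have d10 := d1 1 0 (by decide); have d20 := d1 2 0 (by decide)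
    have d30 := d1 3 0 (by decide); have d21 := d1 2 1 (by decide)
    have d31 := d1 3 1 (by decide); have d32 := d1 3 2 (by decide)
    have sA1 : A 2 2 = A 1 1 := congrFun (congrFun sA 1) 1
    have sA2 : A 0 1 = A 2 3 := congrFun (congrFun sA 2) 3
    have sA3 : A 0 2 = A 1 3 := congrFun (congrFun sA 1) 3
    have sB1 : B 2 2 = B 1 1 := congrFun (congrFun sB 1) 1
    have sB2 : B 0 1 = B 2 3 := congrFun (congrFun sB 2) 3
    have sB3 : B 0 2 = B 1 3 := congrFun (congrFun sB 1) 3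
    have sC1 : C 2 2 = C 1 1 := congrFun (congrFun sC 1) 1
    have sC2 : C 0 1 = C 2 3 := congrFun (congrFun sC 2) 3
    have sC3 : C 0 2 = C 1 3 := congrFun (congrFun sC 1) 3
    have sD1 : D 2 2 = D 1 1 := congrFun (congrFun sD 1) 1
    have sD2 : D 0 1 = D 2 3 := congrFun (congrFun sD 2) 3
    have sD3 : D 0 2 = D 1 3 := congrFun (congrFun sD 1) 3
    refine ⟨0, ((A * B - B * A) * (C * D - D * C)) 0 3, ?_⟩
    ext i j
    fin_cases i <;> fin_cases j <;>
      · simp only [Matrix.mul_apply, Matrix.sub_apply, Fin.sum_univ_four, Matrix.add_apply,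
          Matrix.smul_apply, Matrix.one_apply, Matrix.single, Matrix.of_apply,
          smul_eq_mul, Prod.mk.injEq, finmk0, finmk1, finmk2, finmk3,
          a10, a20, a30, a21, a31, a32, a3, a2, sA1, sA2, sA3,
          b10, b20, b30, b21, b31, b32, b3, b2, sB1, sB2, sB3,
          c10, c20, c30, c21, c31, c32, c3, c2, sC1, sC2, sC3,
          d10, d20, d30, d21, d31, d32, d3, d2, sD1, sD2, sD3]
        simp (config := { decide := true }) [Fin.ext_iff] <;>
          first
          | ring1
          | exact Or.inl trivial
          | exact Or.inl (by ring1)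
  · -- properness
    refine ⟨!![0,1,0,0;0,0,0,0;0,0,0,1;0,0,0,0], !![0,0,0,0;0,1,0,0;0,0,1,0;0,0,0,0],
            !![0,0,1,0;0,0,0,1;0,0,0,0;0,0,0,0], !![0,0,0,0;0,1,0,0;0,0,1,0;0,0,0,0],
            ?_, ?_, ?_, ?_, ?_, ?_, ?_, ?_, ?_⟩
    · exact ⟨by intro i j h; fin_cases i <;> fin_cases j <;> simp_all [Matrix.vecHead, Matrix.vecTail], by rfl, by rfl⟩
    · exact ⟨by intro i j h; fin_cases i <;> fin_cases j <;> simp_all [Matrix.vecHead, Matrix.vecTail], by rfl, by rfl⟩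
    · exact ⟨by intro i j h; fin_cases i <;> fin_cases j <;> simp_all [Matrix.vecHead, Matrix.vecTail], by rfl, by rfl⟩
    · exact ⟨by intro i j h; fin_cases i <;> fin_cases j <;> simp_all [Matrix.vecHead, Matrix.vecTail], by rfl, by rfl⟩
    · ext i j; fin_cases i <;> fin_cases j <;> rfl
    · ext i j; fin_cases i <;> fin_cases j <;> rfl
    · ext i j; fin_cases i <;> fin_cases j <;> rfl
    · ext i j; fin_cases i <;> fin_cases j <;> rfl
    · intro h
      have := congrFun (congrFun h 0) 3
      simp [Matrix.mul_apply, Fin.sum_univ_four] at this
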